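/- For any sequence (a_n) of complex numbers, any 0 ≤ r < 1, and any 0 ≤ R ≤ 1/√2, R · Σ_{n≥0} |a_n| (Rr)^n ≤ (Σ_{n≥0} |a_n|^2 r^{2n})^{1/2}. -/

import Mathlib

open ENNReal

theorem cauchy_schwarz_bohr_step (a : ℕ → ℂ) (r R : ℝ)
    (hr0 : 0 ≤ r) (hr1 : r < 1) (hR0 : 0 ≤ R) (hR : R ≤ 1 / Real.sqrt 2) :
    ENNReal.ofReal R * ∑' n : ℕ, (‖a n‖₊ : ℝ≥0∞) * ENNReal.ofReal ((R * r) ^ n) ≤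
      (∑' n : ℕ, (‖a n‖₊ : ℝ≥0∞) ^ 2 * ENNReal.ofReal (r ^ (2 * n))) ^ ((1 : ℝ) / 2) := by
  set f : ℕ → ℝ≥0∞ := fun n => (‖a n‖₊ : ℝ≥0∞) * ENNReal.ofReal (r ^ n)
  set g : ℕ → ℝ≥0∞ := fun n => ENNReal.ofReal R ^ (n + 1)
  -- rewrite LHS
  have hLHS : ENNReal.ofReal R * ∑' n : ℕ, (‖a n‖₊ : ℝ≥0∞) * ENNReal.ofReal ((R * r) ^ n)
      = ∑' n : ℕ, f n * g n := by
    rw [← ENNReal.tsum_mul_left]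
    congr 1
    funext n
    simp only [f, g, mul_pow, ENNReal.ofReal_mul (pow_nonneg hR0 n),
      ENNReal.ofReal_pow hR0, pow_succ]
    ring
  rw [hLHS]
  -- Cauchy-Schwarz via Hölder on the counting measure
  have hCS : ∑' n : ℕ, f n * g n ≤
      (∑' n : ℕ, f n ^ (2 : ℝ)) ^ ((1 : ℝ) / 2) * (∑' n : ℕ, g n ^ (2 : ℝ)) ^ ((1 : ℝ) / 2) := by
    have h := ENNReal.lintegral_mul_le_Lp_mul_Lq (MeasureTheory.Measure.count : MeasureTheory.Measure ℕ)
      (Real.HolderConjugate.two_two : (2 : ℝ).HolderConjugate 2)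
      (f := f) (g := g) (Measurable.aemeasurable (by measurability))
      (Measurable.aemeasurable (by measurability))
    simpa [MeasureTheory.lintegral_count] using h
  have hA : ∑' n : ℕ, f n ^ (2 : ℝ)
      = ∑' n : ℕ, (‖a n‖₊ : ℝ≥0∞) ^ 2 * ENNReal.ofReal (r ^ (2 * n)) := by
    congr 1
    funext n
    rw [ENNReal.rpow_two, mul_pow, ← ENNReal.ofReal_pow (pow_nonneg hr0 n), ← pow_mul,
      mul_comm n 2]
  have hx : (ENNReal.ofReal R) ^ 2 ≤ 1 / 2 := by
    rw [← ENNReal.ofReal_pow hR0]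
    have h1 : R ^ 2 ≤ 1 / 2 := by
      have h2 := pow_le_pow_left₀ hR0 hR 2
      rwa [div_pow, one_pow, Real.sq_sqrt (by norm_num : (0:ℝ) ≤ 2)] at h2
    calc ENNReal.ofReal (R ^ 2) ≤ ENNReal.ofReal (1 / 2) := ENNReal.ofReal_le_ofReal h1
      _ = 1 / 2 := by
        rw [ENNReal.ofReal_div_of_pos (by norm_num)]
        norm_num
  have hB : ∑' n : ℕ, g n ^ (2 : ℝ) ≤ 1 := by
    have hg : ∀ n, g n ^ (2 : ℝ) = ((ENNReal.ofReal R) ^ 2) ^ n * (ENNReal.ofReal R) ^ 2 := by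
      intro n
      rw [ENNReal.rpow_two]
      simp only [g]
      ring
    simp_rw [hg]
    rw [ENNReal.tsum_mul_right, ENNReal.tsum_geometric]
    have hsub : (1 : ℝ≥0∞) - (ENNReal.ofReal R) ^ 2 ≥ 1 / 2 := by
      have := tsub_le_tsub_left hx (1 : ℝ≥0∞)
      calc (1:ℝ≥0∞) / 2 = 1 - 1/2 := by
            rw [one_div, ENNReal.one_sub_inv_two]
        _ ≤ 1 - (ENNReal.ofReal R) ^ 2 := this
    calc (1 - (ENNReal.ofReal R) ^ 2)⁻¹ * (ENNReal.ofReal R) ^ 2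
        ≤ (1/2 : ℝ≥0∞)⁻¹ * (1/2) := by
          exact mul_le_mul' (ENNReal.inv_le_inv.mpr hsub) hx
      _ = 1 := by
          rw [ENNReal.inv_mul_cancel] <;> norm_num
  calc ∑' n : ℕ, f n * g n
      ≤ (∑' n : ℕ, f n ^ (2 : ℝ)) ^ ((1 : ℝ) / 2) * (∑' n : ℕ, g n ^ (2 : ℝ)) ^ ((1 : ℝ) / 2) :=
        hCS
    _ ≤ (∑' n : ℕ, f n ^ (2 : ℝ)) ^ ((1 : ℝ) / 2) * 1 := by
        gcongr
        exact ENNReal.rpow_le_one hB (by norm_num)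
    _ = (∑' n : ℕ, (‖a n‖₊ : ℝ≥0∞) ^ 2 * ENNReal.ofReal (r ^ (2 * n))) ^ ((1 : ℝ) / 2) := by
        rw [mul_one, hA]
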